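/- Let A be a unital *-algebra over ℂ represented faithfully on a nonzero Hilbert space (equivalently, a unital C*-algebra), and suppose {e_{x,a} : x ∈ I, a ∈ O} is a family of self-adjoint idempotents (projections) in A indexed by finite sets I, O, such that for every x ∈ I, ∑_{a ∈ O} e_{x,a} = 1, and e_{x,a} e_{y,a} = 0 whenever x ≠ y. Then |I| ≤ |O|. -/
import Mathlib


/-- In a (nonzero) unital C*-algebra, a family of projections `e x a` (x ∈ I, a ∈ O)
with each row summing to 1 and column orthogonality forces `|I| ≤ |O|`. -/
theorem card_inputs_le_card_outputs
    {A : Type*} [NormedRing A] [StarRing A] [CStarRing A] [NormedAlgebra ℂ A]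
    [StarModule ℂ A] [CompleteSpace A] [Nontrivial A]
    {I O : Type*} [Fintype I] [Fintype O]
    (e : I → O → A)
    (hidem : ∀ x a, e x a * e x a = e x a)
    (hsa : ∀ x a, star (e x a) = e x a)
    (hrow : ∀ x, ∑ a, e x a = 1)
    (hcol : ∀ x y a, x ≠ y → e x a * e y a = 0) :
    Fintype.card I ≤ Fintype.card O := by
  set p : O → A := fun a => ∑ x, e x a with hp
  have hpsa : ∀ a, star (p a) = p a := by
    intro a
    simp [hp, star_sum, hsa]
  have hpidem : ∀ a, p a * p a = p a := by
    intro a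
    have : p a * p a = ∑ x, ∑ y, e x a * e y a := by
      simp only [hp]
      rw [Finset.sum_mul]
      exact Finset.sum_congr rfl fun x _ => Finset.mul_sum _ _ _
    rw [this]
    rw [show p a = ∑ x : I, e x a from rfl]
    refine Finset.sum_congr rfl fun x _ => ?_
    rw [Finset.sum_eq_single x]
    · exact hidem x a
    · intro y _ hy
      exact hcol x y a (Ne.symm hy)
    · intro h; exact absurd (Finset.mem_univ x) h
  have hnorm : ∀ a, ‖p a‖ ≤ 1 := by
    intro a
    have h2 : ‖p a‖ * ‖p a‖ = ‖p a‖ := by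
      have := CStarRing.norm_star_mul_self (x := p a)
      rw [hpsa, hpidem] at this
      nlinarith [norm_nonneg (p a)]
    nlinarith [norm_nonneg (p a)]
  have hsum : ∑ a, p a = (Fintype.card I : A) := by
    rw [hp]
    rw [Finset.sum_comm]
    simp [hrow, Finset.card_univ]
  have key : (Fintype.card I : ℝ) ≤ (Fintype.card O : ℝ) := by
    calc (Fintype.card I : ℝ) = ‖(Fintype.card I : A)‖ := by
          rw [show ((Fintype.card I : ℕ) : A) = ((Fintype.card I : ℕ) : ℝ) • (1 : A) by
            rw [Nat.cast_smul_eq_nsmul, nsmul_eq_mul, mul_one]]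
          rw [norm_smul]
          simp [norm_one]
      _ = ‖∑ a, p a‖ := by rw [hsum]
      _ ≤ ∑ a : O, ‖p a‖ := norm_sum_le _ _
      _ ≤ ∑ a : O, (1 : ℝ) := Finset.sum_le_sum fun a _ => hnorm a
      _ = Fintype.card O := by simp [Finset.card_univ]
  exact_mod_cast key
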